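/- arXiv:2504.03493 — 2 statements merged into one kernel-verified Lean document; each statement's English description precedes it below -/
import Mathlib

section
/- Let u be a tempered generalized stochastic process on ℝᵈ and let μ : ℝᵈ → [0,∞) be continuous and polynomially bounded, with E( (u,φ)·conj((u,ψ)) ) = ∫_{ℝᵈ} 𝓕ψ(ξ)·conj(𝓕φ(ξ))·μ(ξ) dξ for all φ, ψ ∈ 𝒮(ℝᵈ;ℂ) (u is stationary with spectral density μ). Then for all f, g ∈ 𝒮(ℝᵈ;ℂ): E( (u,f)·conj((u,g)) ) = (2π)^{-d/2} ∫_{ℝ²ᵈ} μ(ξ)·conj( W(f,g)(x,ξ) ) dx dξ; that is, the Wigner spectrum of u equals (2π)^{-d/2}·(1 ⊗ μ). -/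
open MeasureTheory ProbabilityTheory ComplexConjugate
open SchwartzMap
open scoped FourierTransform SchwartzMap

noncomputable section

/-- `ℝᵈ` as a Euclidean space. -/
abbrev Ed (d : ℕ) := EuclideanSpace ℝ (Fin d)

/-- The Fourier transform of a Schwartz function, normalized as
`𝓕 φ (ξ) = (2π)^{-d/2} ∫ φ(x) e^{-i⟨x,ξ⟩} dx`. -/
def ftInt {d : ℕ} (φ : SchwartzMap (Ed d) ℂ) (ξ : Ed d) : ℂ :=
  (((2 * Real.pi) ^ (-(d : ℝ) / 2) : ℝ) : ℂ) *
    ∫ x : Ed d, φ x * Complex.exp (-((inner ℝ x ξ : ℝ) : ℂ) * Complex.I)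

/-- The cross-Wigner distribution of two Schwartz functions on `ℝᵈ`:
`W(f,g)(x,ξ) = (2π)^{-d/2} ∫ f(x+y/2) conj(g(x−y/2)) e^{-i⟨y,ξ⟩} dy`. -/
def wig {d : ℕ} (f g : SchwartzMap (Ed d) ℂ) (x ξ : Ed d) : ℂ :=
  (((2 * Real.pi) ^ (-(d : ℝ) / 2) : ℝ) : ℂ) *
    ∫ y : Ed d, f (x + (2 : ℝ)⁻¹ • y) * conj (g (x - (2 : ℝ)⁻¹ • y)) *
      Complex.exp (-((inner ℝ y ξ : ℝ) : ℂ) * Complex.I)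

section Helpers

open scoped ContDiff

variable {E : Type*} [NormedAddCommGroup E] [NormedSpace ℝ E]
variable {F : Type*} [NormedAddCommGroup F] [NormedSpace ℝ F]

lemma fderiv_comp_const_add' (f : E → F) (hf : Differentiable ℝ f) (a z : E) :
    fderiv ℝ (fun w => f (a + w)) z = fderiv ℝ f (a + z) := by
  have h2 : HasFDerivAt (fun w : E => a + w) (ContinuousLinearMap.id ℝ E) z :=
    (hasFDerivAt_id z).const_add a
  have := ((hf (a + z)).hasFDerivAt.comp z h2).fderiv
  simpa [Function.comp_def] using this

lemma iteratedFDeriv_comp_const_add (f : E → F) (hf : ContDiff ℝ ∞ f) (a : E) (n : ℕ) :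
    iteratedFDeriv ℝ n (fun w => f (a + w)) = fun z => iteratedFDeriv ℝ n f (a + z) := by
  induction n with
  | zero => funext z; ext m; simp
  | succ n IH =>
    funext z
    rw [iteratedFDeriv_succ_eq_comp_left, iteratedFDeriv_succ_eq_comp_left]
    simp only [Function.comp_apply]
    congr 1
    rw [IH]
    refine fderiv_comp_const_add' _ (hf.differentiable_iteratedFDeriv ?_) a z
    exact_mod_cast WithTop.coe_lt_top _

lemma itd_affine_bound (f : E → F) (hf : ContDiff ℝ ∞ f) (x : E) (c : ℝ) (hc : |c| ≤ 1)
    (n : ℕ) (y : E) :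
    ‖iteratedFDeriv ℝ n (fun w => f (x + c • w)) y‖ ≤ ‖iteratedFDeriv ℝ n f (x + c • y)‖ := by
  have hfx : ContDiff ℝ ∞ (fun z => f (x + z)) := hf.comp (contDiff_const.add contDiff_id)
  set L : E →L[ℝ] E := c • ContinuousLinearMap.id ℝ E with hL
  have hcomp : (fun w => f (x + c • w)) = (fun z => f (x + z)) ∘ L := by
    funext w; simp [hL]
  rw [hcomp, ContinuousLinearMap.iteratedFDeriv_comp_right L hfx y (mod_cast le_top)]
  refine (ContinuousMultilinearMap.norm_compContinuousLinearMap_le _ _).trans ?_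
  have hLnorm : ‖L‖ ≤ 1 := by
    rw [hL]
    refine le_trans (ContinuousLinearMap.opNorm_smul_le _ _) ?_
    calc ‖c‖ * ‖ContinuousLinearMap.id ℝ E‖ ≤ 1 * 1 := by
          refine mul_le_mul ?_ ContinuousLinearMap.norm_id_le (norm_nonneg _) zero_le_one
          simpa [Real.norm_eq_abs] using hc
    _ = 1 := one_mul 1
  have hprod : (∏ _i : Fin n, ‖L‖) ≤ 1 := by
    refine Finset.prod_le_one (fun _ _ => norm_nonneg _) (fun _ _ => hLnorm)
  have h0 : ‖iteratedFDeriv ℝ n (fun z => f (x + z)) (L y)‖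
      = ‖iteratedFDeriv ℝ n f (x + c • y)‖ := by
    rw [iteratedFDeriv_comp_const_add _ hf]
    simp [hL]
  calc ‖iteratedFDeriv ℝ n (fun z => f (x + z)) (L y)‖ * ∏ _i : Fin n, ‖L‖
      ≤ ‖iteratedFDeriv ℝ n (fun z => f (x + z)) (L y)‖ * 1 :=
        mul_le_mul_of_nonneg_left hprod (norm_nonneg _)
    _ = ‖iteratedFDeriv ℝ n f (x + c • y)‖ := by rw [mul_one, h0]

lemma key_ineq {a b v : ℝ} (ha : 0 ≤ a) (hb : 0 ≤ b) (h : v ≤ a + b) :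
    1 + v ≤ (1 + a) * (1 + b) := by nlinarith

lemma conj_itd_norm (g : E → ℂ) (n : ℕ) (y : E) :
    ‖iteratedFDeriv ℝ n (fun w => conj (g w)) y‖ = ‖iteratedFDeriv ℝ n g y‖ := by
  have : (fun w => conj (g w)) = (⇑Complex.conjLIE) ∘ g := by
    funext w; rfl
  rw [this, LinearIsometryEquiv.norm_iteratedFDeriv_comp_left]

lemma hfun_deriv_bound (f g : 𝓢(E, ℂ)) (k n : ℕ) :
    ∃ C, 0 ≤ C ∧ ∀ (x y : E),
      (1 + ‖x‖) ^ k * (1 + ‖y‖) ^ k * ‖iteratedFDeriv ℝ n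
        (fun w => f (x + (2:ℝ)⁻¹ • w) * conj (g (x - (2:ℝ)⁻¹ • w))) y‖ ≤ C := by
  classical
  set Sf : ℝ := 2 ^ (2*k) * ((Finset.Iic (2*k, n)).sup (schwartzSeminormFamily ℝ E ℂ)) f with hSf
  set Sg : ℝ := 2 ^ (2*k) * ((Finset.Iic (2*k, n)).sup (schwartzSeminormFamily ℝ E ℂ)) g with hSg
  have hSf0 : 0 ≤ Sf := by positivity
  have hSg0 : 0 ≤ Sg := by positivity
  refine ⟨∑ i ∈ Finset.range (n+1), (n.choose i : ℝ) * Sf * Sg, by positivity, ?_⟩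
  intro x y
  set a := x + (2:ℝ)⁻¹ • y with hadef
  set b := x + (-(2:ℝ)⁻¹) • y with hbdef
  have habs : |(2:ℝ)⁻¹| ≤ 1 := by rw [abs_of_pos (by norm_num : (0:ℝ) < 2⁻¹)]; norm_num
  have hnabs : |(-(2:ℝ)⁻¹)| ≤ 1 := by rw [abs_neg, abs_of_pos (by norm_num : (0:ℝ) < 2⁻¹)]; norm_num
  have hu : ContDiff ℝ ∞ (fun w : E => f (x + (2:ℝ)⁻¹ • w)) :=
    f.smooth'.comp (contDiff_const.add (contDiff_id.const_smul _))
  have hv : ContDiff ℝ ∞ (fun w : E => conj (g (x + (-(2:ℝ)⁻¹) • w))) :=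
    Complex.conjLIE.contDiff.comp
      (g.smooth'.comp (contDiff_const.add (contDiff_id.const_smul _)))
  have hrw : (fun w => f (x + (2:ℝ)⁻¹ • w) * conj (g (x - (2:ℝ)⁻¹ • w)))
      = fun w => (fun w' => f (x + (2:ℝ)⁻¹ • w')) w *
          (fun w' => conj (g (x + (-(2:ℝ)⁻¹) • w'))) w := by
    funext w; simp [sub_eq_add_neg, neg_smul]
  rw [hrw]
  have hmul := norm_iteratedFDeriv_mul_le (𝕜 := ℝ) (A := ℂ) (n := n) hu hv y (mod_cast le_top)
  have hW0 : (0:ℝ) ≤ (1 + ‖x‖) ^ k * (1 + ‖y‖) ^ k := by positivity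
  calc (1 + ‖x‖) ^ k * (1 + ‖y‖) ^ k * ‖iteratedFDeriv ℝ n
        (fun w => (fun w' => f (x + (2:ℝ)⁻¹ • w')) w *
          (fun w' => conj (g (x + (-(2:ℝ)⁻¹) • w'))) w) y‖
      ≤ (1 + ‖x‖) ^ k * (1 + ‖y‖) ^ k *
        ∑ i ∈ Finset.range (n+1), (n.choose i : ℝ) *
          ‖iteratedFDeriv ℝ i (fun w' => f (x + (2:ℝ)⁻¹ • w')) y‖ *
          ‖iteratedFDeriv ℝ (n-i) (fun w' => conj (g (x + (-(2:ℝ)⁻¹) • w'))) y‖ :=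
        mul_le_mul_of_nonneg_left hmul hW0
    _ ≤ ∑ i ∈ Finset.range (n+1), (n.choose i : ℝ) * Sf * Sg := by
        rw [Finset.mul_sum]
        refine Finset.sum_le_sum ?_
        intro i hi
        have hin : i ≤ n := Nat.lt_succ_iff.mp (Finset.mem_range.mp hi)
        -- bound the two derivative factors
        have h1 : ‖iteratedFDeriv ℝ i (fun w' => f (x + (2:ℝ)⁻¹ • w')) y‖
            ≤ ‖iteratedFDeriv ℝ i (⇑f) a‖ := itd_affine_bound f f.smooth' x _ habs i y
        have h2 : ‖iteratedFDeriv ℝ (n-i) (fun w' => conj (g (x + (-(2:ℝ)⁻¹) • w'))) y‖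
            ≤ ‖iteratedFDeriv ℝ (n-i) (⇑g) b‖ := by
          have := conj_itd_norm (fun w' => g (x + (-(2:ℝ)⁻¹) • w')) (n-i) y
          rw [this]
          exact itd_affine_bound g g.smooth' x _ hnabs (n-i) y
        -- weight inequality
        have hxa : ‖x‖ ≤ ‖a‖ + ‖b‖ := by
          have : x = (2:ℝ)⁻¹ • (a + b) := by
            rw [hadef, hbdef]; module
          calc ‖x‖ = (2:ℝ)⁻¹ * ‖a + b‖ := by rw [this, norm_smul]; norm_num
          _ ≤ ‖a‖ + ‖b‖ := by
            have := norm_add_le a b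
            nlinarith [norm_nonneg (a+b)]
        have hya : ‖y‖ ≤ ‖a‖ + ‖b‖ := by
          have : y = a - b := by rw [hadef, hbdef]; module
          rw [this]; exact norm_sub_le a b
        have hWa : (1 + ‖x‖) ^ k * (1 + ‖y‖) ^ k
            ≤ (1 + ‖a‖) ^ (2*k) * (1 + ‖b‖) ^ (2*k) := by
          have e1 : (1 + ‖x‖) ≤ (1 + ‖a‖) * (1 + ‖b‖) :=
            key_ineq (norm_nonneg a) (norm_nonneg b) hxa
          have e2 : (1 + ‖y‖) ≤ (1 + ‖a‖) * (1 + ‖b‖) :=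
            key_ineq (norm_nonneg a) (norm_nonneg b) hya
          have p1 : (1 + ‖x‖) ^ k ≤ ((1 + ‖a‖) * (1 + ‖b‖)) ^ k :=
            pow_le_pow_left₀ (by positivity) e1 k
          have p2 : (1 + ‖y‖) ^ k ≤ ((1 + ‖a‖) * (1 + ‖b‖)) ^ k :=
            pow_le_pow_left₀ (by positivity) e2 k
          calc (1 + ‖x‖) ^ k * (1 + ‖y‖) ^ k
              ≤ ((1 + ‖a‖) * (1 + ‖b‖)) ^ k * ((1 + ‖a‖) * (1 + ‖b‖)) ^ k :=
                mul_le_mul p1 p2 (by positivity) (by positivity)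
          _ = (1 + ‖a‖) ^ (2*k) * (1 + ‖b‖) ^ (2*k) := by
                rw [← pow_add, mul_pow, two_mul]
        have hA : (1 + ‖a‖) ^ (2*k) * ‖iteratedFDeriv ℝ i (⇑f) a‖ ≤ Sf := by
          rw [hSf]
          exact one_add_le_sup_seminorm_apply (m := (2*k, n)) le_rfl hin f a
        have hB : (1 + ‖b‖) ^ (2*k) * ‖iteratedFDeriv ℝ (n-i) (⇑g) b‖ ≤ Sg := by
          rw [hSg]
          exact one_add_le_sup_seminorm_apply (m := (2*k, n)) le_rfl (Nat.sub_le n i) g b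
        have hc0 : (0:ℝ) ≤ (n.choose i : ℝ) := by positivity
        calc (1 + ‖x‖) ^ k * (1 + ‖y‖) ^ k *
              ((n.choose i : ℝ) * ‖iteratedFDeriv ℝ i (fun w' => f (x + (2:ℝ)⁻¹ • w')) y‖ *
               ‖iteratedFDeriv ℝ (n-i) (fun w' => conj (g (x + (-(2:ℝ)⁻¹) • w'))) y‖)
            ≤ ((1 + ‖a‖) ^ (2*k) * (1 + ‖b‖) ^ (2*k)) *
              ((n.choose i : ℝ) * ‖iteratedFDeriv ℝ i (⇑f) a‖ *
               ‖iteratedFDeriv ℝ (n-i) (⇑g) b‖) := by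
              refine mul_le_mul hWa ?_ (by positivity) (by positivity)
              refine mul_le_mul (mul_le_mul_of_nonneg_left h1 hc0) h2 (norm_nonneg _) (by positivity)
          _ = (n.choose i : ℝ) * ((1 + ‖a‖) ^ (2*k) * ‖iteratedFDeriv ℝ i (⇑f) a‖) *
              ((1 + ‖b‖) ^ (2*k) * ‖iteratedFDeriv ℝ (n-i) (⇑g) b‖) := by ring
          _ ≤ (n.choose i : ℝ) * Sf * Sg := by
              refine mul_le_mul (mul_le_mul_of_nonneg_left hA hc0) hB (by positivity) (by positivity)

/-- The function `y ↦ f(x+y/2) conj (g(x-y/2))` as a Schwartz map. -/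
def wigAux (f g : 𝓢(E, ℂ)) (x : E) : 𝓢(E, ℂ) where
  toFun := fun y => f (x + (2:ℝ)⁻¹ • y) * conj (g (x - (2:ℝ)⁻¹ • y))
  smooth' := by
    have h1 : ContDiff ℝ ∞ (fun w : E => f (x + (2:ℝ)⁻¹ • w)) :=
      f.smooth'.comp (contDiff_const.add (contDiff_id.const_smul _))
    have h2 : ContDiff ℝ ∞ (fun w : E => conj (g (x - (2:ℝ)⁻¹ • w))) :=
      Complex.conjLIE.contDiff.comp
        (g.smooth'.comp (contDiff_const.sub (contDiff_id.const_smul _)))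
    exact h1.mul h2
  decay' := by
    intro k n
    obtain ⟨C, hC0, hC⟩ := hfun_deriv_bound f g k n
    refine ⟨C, fun y => ?_⟩
    refine le_trans ?_ (hC x y)
    have h1 : ‖y‖ ^ k ≤ (1 + ‖x‖) ^ k * (1 + ‖y‖) ^ k := by
      calc ‖y‖ ^ k ≤ (1 + ‖y‖) ^ k := by
            refine pow_le_pow_left₀ (norm_nonneg _) (by linarith [norm_nonneg y]) k
        _ = 1 * (1 + ‖y‖) ^ k := (one_mul _).symm
        _ ≤ (1 + ‖x‖) ^ k * (1 + ‖y‖) ^ k := by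
            refine mul_le_mul_of_nonneg_right (one_le_pow₀ (by linarith [norm_nonneg x])) (by positivity)
    exact mul_le_mul_of_nonneg_right h1 (norm_nonneg _)

@[simp] lemma wigAux_apply (f g : 𝓢(E, ℂ)) (x y : E) :
    wigAux f g x y = f (x + (2:ℝ)⁻¹ • y) * conj (g (x - (2:ℝ)⁻¹ • y)) := rfl

lemma wigAux_seminorm_bound (f g : 𝓢(E, ℂ)) (K : ℕ) (i : ℕ × ℕ) :
    ∃ C, 0 ≤ C ∧ ∀ x : E,
      (1 + ‖x‖) ^ K * schwartzSeminormFamily ℝ E ℂ i (wigAux f g x) ≤ C := by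
  obtain ⟨k, n⟩ := i
  obtain ⟨C, hC0, hC⟩ := hfun_deriv_bound f g (max k K) n
  refine ⟨C, hC0, fun x => ?_⟩
  have hx1 : (0:ℝ) < (1 + ‖x‖) ^ K := by positivity
  rw [mul_comm, ← le_div_iff₀ hx1]
  refine SchwartzMap.seminorm_le_bound ℝ k n _ (by positivity) ?_
  intro y
  rw [le_div_iff₀ hx1]
  refine le_trans ?_ (hC x y)
  have h1 : ‖y‖ ^ k * ‖iteratedFDeriv ℝ n (⇑(wigAux f g x)) y‖ * (1 + ‖x‖) ^ K
      ≤ ((1 + ‖x‖) ^ (max k K) * (1 + ‖y‖) ^ (max k K)) *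
        ‖iteratedFDeriv ℝ n (⇑(wigAux f g x)) y‖ := by
    have e1 : ‖y‖ ^ k ≤ (1 + ‖y‖) ^ (max k K) := by
      calc ‖y‖ ^ k ≤ (1 + ‖y‖) ^ k :=
            pow_le_pow_left₀ (norm_nonneg _) (by linarith [norm_nonneg y]) k
        _ ≤ (1 + ‖y‖) ^ (max k K) :=
            pow_le_pow_right₀ (by linarith [norm_nonneg y]) (le_max_left _ _)
    have e2 : (1 + ‖x‖) ^ K ≤ (1 + ‖x‖) ^ (max k K) :=
      pow_le_pow_right₀ (by linarith [norm_nonneg x]) (le_max_right _ _)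
    calc ‖y‖ ^ k * ‖iteratedFDeriv ℝ n (⇑(wigAux f g x)) y‖ * (1 + ‖x‖) ^ K
        = (‖y‖ ^ k * (1 + ‖x‖) ^ K) * ‖iteratedFDeriv ℝ n (⇑(wigAux f g x)) y‖ := by ring
      _ ≤ ((1 + ‖y‖) ^ (max k K) * (1 + ‖x‖) ^ (max k K)) *
            ‖iteratedFDeriv ℝ n (⇑(wigAux f g x)) y‖ := by
          refine mul_le_mul_of_nonneg_right ?_ (norm_nonneg _)
          exact mul_le_mul e1 e2 (by positivity) (by positivity)
      _ = ((1 + ‖x‖) ^ (max k K) * (1 + ‖y‖) ^ (max k K)) *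
            ‖iteratedFDeriv ℝ n (⇑(wigAux f g x)) y‖ := by ring
  exact h1

section Fourier

variable {V : Type*} [NormedAddCommGroup V] [InnerProductSpace ℝ V] [FiniteDimensional ℝ V]
  [MeasurableSpace V] [BorelSpace V]

lemma fourier_seminorm_bound (f g : 𝓢(V, ℂ)) (K : ℕ) (i : ℕ × ℕ) :
    ∃ C, 0 ≤ C ∧ ∀ x : V,
      (1 + ‖x‖) ^ K *
        schwartzSeminormFamily ℝ V ℂ i (fourierTransformCLM ℝ (wigAux f g x)) ≤ C := by
  classical
  set T := fourierTransformCLM (𝕜 := ℝ) (V := V) (E := ℂ) with hT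
  set q : Seminorm ℝ 𝓢(V, ℂ) :=
    (schwartzSeminormFamily ℝ V ℂ i).comp T.toLinearMap with hq
  have hqc : Continuous q := by
    have h1 : Continuous (schwartzSeminormFamily ℝ V ℂ i) :=
      (schwartz_withSeminorms ℝ V ℂ).continuous_seminorm i
    exact h1.comp T.continuous
  obtain ⟨s, c0, hc00, hle⟩ :=
    Seminorm.bound_of_continuous (schwartz_withSeminorms ℝ V ℂ) q hqc
  choose D hD0 hDb using fun j => wigAux_seminorm_bound f g K j
  have hsum0 : 0 ≤ ∑ j ∈ s, D j := Finset.sum_nonneg fun j _ => hD0 j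
  refine ⟨(c0 : ℝ) * ∑ j ∈ s, D j, mul_nonneg c0.coe_nonneg hsum0, fun x => ?_⟩
  have hx1 : (0:ℝ) < (1 + ‖x‖) ^ K := by positivity
  have step1 : schwartzSeminormFamily ℝ V ℂ i (T (wigAux f g x))
      ≤ (c0 : ℝ) * (s.sup (schwartzSeminormFamily ℝ V ℂ)) (wigAux f g x) := by
    have := hle (wigAux f g x)
    simpa [hq, Seminorm.comp_apply, NNReal.smul_def] using this
  have step2 : (s.sup (schwartzSeminormFamily ℝ V ℂ)) (wigAux f g x)
      ≤ (∑ j ∈ s, D j) / (1 + ‖x‖) ^ K := by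
    refine Seminorm.finset_sup_apply_le (div_nonneg hsum0 (le_of_lt hx1)) ?_
    intro j hj
    rw [le_div_iff₀ hx1]
    calc schwartzSeminormFamily ℝ V ℂ j (wigAux f g x) * (1 + ‖x‖) ^ K
        = (1 + ‖x‖) ^ K * schwartzSeminormFamily ℝ V ℂ j (wigAux f g x) := mul_comm _ _
      _ ≤ D j := hDb j x
      _ ≤ ∑ j ∈ s, D j := Finset.single_le_sum (fun j _ => hD0 j) hj
  calc (1 + ‖x‖) ^ K * schwartzSeminormFamily ℝ V ℂ i (T (wigAux f g x))
      ≤ (1 + ‖x‖) ^ K * ((c0 : ℝ) *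
          ((∑ j ∈ s, D j) / (1 + ‖x‖) ^ K)) := by
        refine mul_le_mul_of_nonneg_left ?_ (le_of_lt hx1)
        refine step1.trans (mul_le_mul_of_nonneg_left step2 (by positivity))
    _ = (c0 : ℝ) * ∑ j ∈ s, D j := by field_simp

open scoped FourierTransform in
lemma fourier_wigAux_decay (f g : 𝓢(V, ℂ)) (K M : ℕ) :
    ∃ C, 0 ≤ C ∧ ∀ (x w : V),
      (1 + ‖x‖) ^ K * ((1 + ‖w‖) ^ M * ‖𝓕 (⇑(wigAux f g x)) w‖) ≤ C := by
  classical
  choose Cc hc0 hcb using fun i => fourier_seminorm_bound f g K i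
  have hsum0 : 0 ≤ ∑ i ∈ Finset.Iic (M, 0), Cc i :=
    Finset.sum_nonneg fun i _ => hc0 i
  refine ⟨2 ^ M * ∑ i ∈ Finset.Iic (M, 0), Cc i,
    mul_nonneg (by positivity) hsum0, fun x w => ?_⟩
  have hx1 : (0:ℝ) < (1 + ‖x‖) ^ K := by positivity
  set T := fourierTransformCLM (𝕜 := ℝ) (V := V) (E := ℂ)
  have key : (1 + ‖w‖) ^ M * ‖𝓕 (⇑(wigAux f g x)) w‖
      ≤ 2 ^ M * (Finset.Iic (M, 0)).sup (schwartzSeminormFamily ℝ V ℂ)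
          (T (wigAux f g x)) := by
    have h0 : ‖𝓕 (⇑(wigAux f g x)) w‖ = ‖iteratedFDeriv ℝ 0 (⇑(T (wigAux f g x))) w‖ := by
      rw [norm_iteratedFDeriv_zero, fourierTransformCLM_apply, fourier_coe]
    rw [h0]
    exact one_add_le_sup_seminorm_apply (m := (M, 0)) le_rfl le_rfl _ w
  have key2 : (Finset.Iic (M, 0)).sup (schwartzSeminormFamily ℝ V ℂ) (T (wigAux f g x))
      ≤ (∑ i ∈ Finset.Iic (M, 0), Cc i) / (1 + ‖x‖) ^ K := by
    refine Seminorm.finset_sup_apply_le (div_nonneg hsum0 (le_of_lt hx1)) ?_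
    intro i hi
    rw [le_div_iff₀ hx1]
    calc schwartzSeminormFamily ℝ V ℂ i (T (wigAux f g x)) * (1 + ‖x‖) ^ K
        = (1 + ‖x‖) ^ K * schwartzSeminormFamily ℝ V ℂ i (T (wigAux f g x)) := mul_comm _ _
      _ ≤ Cc i := hcb i x
      _ ≤ ∑ i ∈ Finset.Iic (M, 0), Cc i := Finset.single_le_sum (fun i _ => hc0 i) hi
  calc (1 + ‖x‖) ^ K * ((1 + ‖w‖) ^ M * ‖𝓕 (⇑(wigAux f g x)) w‖)
      ≤ (1 + ‖x‖) ^ K * (2 ^ M *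
          ((∑ i ∈ Finset.Iic (M, 0), Cc i) / (1 + ‖x‖) ^ K)) := by
        refine mul_le_mul_of_nonneg_left (key.trans ?_) (le_of_lt hx1)
        exact mul_le_mul_of_nonneg_left key2 (by positivity)
    _ = 2 ^ M * ∑ i ∈ Finset.Iic (M, 0), Cc i := by field_simp
end Fourier

lemma norm_exp_neg_inner (r : ℝ) : ‖Complex.exp (-(r:ℂ) * Complex.I)‖ = 1 := by
  rw [Complex.norm_exp]
  simp

open scoped FourierTransform in
lemma raw_ft_eq {V : Type*} [NormedAddCommGroup V] [InnerProductSpace ℝ V]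
    [FiniteDimensional ℝ V] [MeasurableSpace V] [BorelSpace V] (h : V → ℂ) (ξ : V) :
    ∫ y, h y * Complex.exp (-((inner ℝ y ξ : ℝ) : ℂ) * Complex.I)
      = 𝓕 h ((2 * Real.pi)⁻¹ • ξ) := by
  rw [Real.fourier_eq']
  congr 1
  funext y
  rw [smul_eq_mul, mul_comm]
  congr 2
  have hinner : (inner ℝ y ((2 * Real.pi)⁻¹ • ξ) : ℝ) = (2 * Real.pi)⁻¹ * (inner ℝ y ξ : ℝ) :=
    real_inner_smul_right y ξ _
  rw [hinner]
  push_cast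
  have hπ : (2 * (Real.pi : ℂ)) ≠ 0 := by
    simp [Real.pi_ne_zero, Complex.ofReal_ne_zero]
  field_simp

open scoped FourierTransform in
lemma wig_eq_fourier {d : ℕ} (f g : 𝓢(Ed d, ℂ)) (x ξ : Ed d) :
    wig f g x ξ = (((2 * Real.pi) ^ (-(d : ℝ) / 2) : ℝ) : ℂ) *
      𝓕 (⇑(wigAux f g x)) ((2 * Real.pi)⁻¹ • ξ) := by
  rw [wig, ← raw_ft_eq]
  rfl

lemma two_pi_pos : (0:ℝ) < 2 * Real.pi := by positivity

lemma wig_bound {d : ℕ} (f g : 𝓢(Ed d, ℂ)) (K M : ℕ) :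
    ∃ C, 0 ≤ C ∧ ∀ x ξ : Ed d,
      (1 + ‖x‖) ^ K * (1 + ‖ξ‖) ^ M * ‖wig f g x ξ‖ ≤ C := by
  obtain ⟨C, hC0, hC⟩ := fourier_wigAux_decay f g K M
  set c : ℝ := (2 * Real.pi) ^ (-(d : ℝ) / 2) with hc
  have hc0 : 0 < c := Real.rpow_pos_of_pos two_pi_pos _
  refine ⟨c * ((2 * Real.pi) ^ M * C), by positivity, fun x ξ => ?_⟩
  rw [wig_eq_fourier]
  set w : Ed d := (2 * Real.pi)⁻¹ • ξ with hw
  have hnw : ‖ξ‖ = (2 * Real.pi) * ‖w‖ := by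
    rw [hw, norm_smul, Real.norm_eq_abs, abs_of_pos (by positivity)]
    field_simp
  have hξw : (1 + ‖ξ‖) ^ M ≤ (2 * Real.pi) ^ M * (1 + ‖w‖) ^ M := by
    rw [← mul_pow]
    refine pow_le_pow_left₀ (by positivity) ?_ M
    rw [hnw]
    nlinarith [Real.pi_gt_three, norm_nonneg w]
  have hnorm : ‖(((2 * Real.pi) ^ (-(d : ℝ) / 2) : ℝ) : ℂ) * 𝓕 (⇑(wigAux f g x)) w‖
      = c * ‖𝓕 (⇑(wigAux f g x)) w‖ := by
    rw [norm_mul, Complex.norm_real, Real.norm_eq_abs, abs_of_pos hc0]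
  rw [hnorm]
  calc (1 + ‖x‖) ^ K * (1 + ‖ξ‖) ^ M * (c * ‖𝓕 (⇑(wigAux f g x)) w‖)
      ≤ (1 + ‖x‖) ^ K * ((2 * Real.pi) ^ M * (1 + ‖w‖) ^ M) *
          (c * ‖𝓕 (⇑(wigAux f g x)) w‖) := by
        refine mul_le_mul_of_nonneg_right (mul_le_mul_of_nonneg_left hξw (by positivity)) ?_
        positivity
    _ = c * (2 * Real.pi) ^ M *
          ((1 + ‖x‖) ^ K * ((1 + ‖w‖) ^ M * ‖𝓕 (⇑(wigAux f g x)) w‖)) := by ring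
    _ ≤ c * (2 * Real.pi) ^ M * C := by
        refine mul_le_mul_of_nonneg_left (hC x w) (by positivity)
    _ = c * ((2 * Real.pi) ^ M * C) := by ring

lemma schwartz_pair_bound (f g : 𝓢(E, ℂ)) (m : ℕ) :
    ∃ B, 0 ≤ B ∧ ∀ a b : E,
      ‖f a‖ * ‖g b‖ ≤ B * (((1 + ‖a‖) * (1 + ‖b‖)) ^ m)⁻¹ := by
  set Sf : ℝ := 2 ^ m * ((Finset.Iic (m, 0)).sup (schwartzSeminormFamily ℝ E ℂ)) f
  set Sg : ℝ := 2 ^ m * ((Finset.Iic (m, 0)).sup (schwartzSeminormFamily ℝ E ℂ)) g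
  have hSf0 : 0 ≤ Sf := by positivity
  have hSg0 : 0 ≤ Sg := by positivity
  refine ⟨Sf * Sg, by positivity, fun a b => ?_⟩
  have hfa : (1 + ‖a‖) ^ m * ‖f a‖ ≤ Sf := by
    have := one_add_le_sup_seminorm_apply (𝕜 := ℝ) (m := (m, 0)) le_rfl le_rfl f a
    rwa [norm_iteratedFDeriv_zero] at this
  have hgb : (1 + ‖b‖) ^ m * ‖g b‖ ≤ Sg := by
    have := one_add_le_sup_seminorm_apply (𝕜 := ℝ) (m := (m, 0)) le_rfl le_rfl g b
    rwa [norm_iteratedFDeriv_zero] at this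
  have hab : (0:ℝ) < ((1 + ‖a‖) * (1 + ‖b‖)) ^ m := by positivity
  calc ‖f a‖ * ‖g b‖ ≤ (Sf * ((1 + ‖a‖) ^ m)⁻¹) * (Sg * ((1 + ‖b‖) ^ m)⁻¹) := by
        refine mul_le_mul ?_ ?_ (norm_nonneg _) (by positivity)
        · have h1 : (0:ℝ) < (1 + ‖a‖) ^ m := by positivity
          rw [← le_div_iff₀' h1] at hfa
          simpa [div_eq_inv_mul, mul_comm] using hfa
        · have h1 : (0:ℝ) < (1 + ‖b‖) ^ m := by positivity
          rw [← le_div_iff₀' h1] at hgb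
          simpa [div_eq_inv_mul, mul_comm] using hgb
    _ = Sf * Sg * (((1 + ‖a‖) * (1 + ‖b‖)) ^ m)⁻¹ := by
        rw [mul_pow, mul_inv]
        ring

lemma one_add_prod_ge {a b v : ℝ} (ha : 0 ≤ a) (hb : 0 ≤ b) (h : v ≤ a + b) :
    1 + v ≤ (1 + a) * (1 + b) := key_ineq ha hb h

lemma inv_pow_le_inv_pow {m : ℕ} {u v : ℝ} (hv : 0 < v) (h : v ≤ u) :
    (u ^ m)⁻¹ ≤ (v ^ m)⁻¹ :=
  inv_anti₀ (pow_pos hv m) (pow_le_pow_left₀ hv.le h m)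

lemma wig_continuous {d : ℕ} (f g : 𝓢(Ed d, ℂ)) :
    Continuous fun p : Ed d × Ed d => wig f g p.1 p.2 := by
  obtain ⟨B, hB0, hB⟩ := schwartz_pair_bound f g (d + 1)
  unfold wig
  refine continuous_const.mul ?_
  refine continuous_of_dominated (bound := fun y : Ed d => B * ((1 + ‖y‖) ^ (d+1))⁻¹)
    ?_ ?_ ?_ ?_
  · intro p
    refine Continuous.aestronglyMeasurable ?_
    refine Continuous.mul (Continuous.mul ?_ ?_) ?_
    · exact f.continuous.comp (by fun_prop)
    · exact Complex.continuous_conj.comp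
        (g.continuous.comp (by fun_prop))
    · refine Complex.continuous_exp.comp ?_
      refine Continuous.mul (Continuous.neg ?_) continuous_const
      fun_prop
  · intro p
    refine Filter.Eventually.of_forall fun y => ?_
    have hne : ‖Complex.exp (-((inner ℝ y p.2 : ℝ) : ℂ) * Complex.I)‖ = 1 :=
      norm_exp_neg_inner _
    rw [norm_mul, norm_mul, hne, mul_one]
    set a := p.1 + (2:ℝ)⁻¹ • y
    set b := p.1 - (2:ℝ)⁻¹ • y
    have hyab : ‖y‖ ≤ ‖a‖ + ‖b‖ := by
      have : y = a - b := by simp only [a, b]; module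
      rw [this]; exact norm_sub_le a b
    have h1 : (1 + ‖y‖) ≤ (1 + ‖a‖) * (1 + ‖b‖) :=
      one_add_prod_ge (norm_nonneg _) (norm_nonneg _) hyab
    have hnormconj : ‖(starRingEnd ℂ) (g b)‖ = ‖g b‖ := RCLike.norm_conj _
    rw [hnormconj]
    calc ‖f a‖ * ‖g b‖ ≤ B * (((1 + ‖a‖) * (1 + ‖b‖)) ^ (d+1))⁻¹ := hB a b
      _ ≤ B * ((1 + ‖y‖) ^ (d+1))⁻¹ := by
          refine mul_le_mul_of_nonneg_left ?_ hB0
          exact inv_pow_le_inv_pow (by positivity) h1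
  · have hfin : (Module.finrank ℝ (Ed d) : ℝ) < ((d+1 : ℕ) : ℝ) := by
      simp [finrank_euclideanSpace]
    have h1 : Integrable (fun y : Ed d => (1 + ‖y‖) ^ (-((d+1 : ℕ):ℝ))) volume :=
      integrable_one_add_norm hfin
    have h2 : Integrable (fun y : Ed d => ((1 + ‖y‖) ^ (d+1 : ℕ))⁻¹) volume := by
      refine h1.congr (Filter.Eventually.of_forall fun y => ?_)
      show (1 + ‖y‖) ^ (-((d+1 : ℕ):ℝ)) = ((1 + ‖y‖) ^ (d+1 : ℕ))⁻¹
      rw [Real.rpow_neg (by positivity), Real.rpow_natCast]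
    exact h2.const_mul B
  · refine Filter.Eventually.of_forall fun y => ?_
    refine Continuous.mul (Continuous.mul ?_ ?_) ?_
    · exact f.continuous.comp ((continuous_fst).add continuous_const)
    · exact Complex.continuous_conj.comp
        (g.continuous.comp ((continuous_fst).sub continuous_const))
    · refine Complex.continuous_exp.comp ?_
      refine Continuous.mul (Continuous.neg ?_) continuous_const
      fun_prop

lemma integrable_japanese (d : ℕ) :
    Integrable (fun y : Ed d => ((1 + ‖y‖) ^ (d+1 : ℕ))⁻¹) volume := by
  have hfin : (Module.finrank ℝ (Ed d) : ℝ) < ((d+1 : ℕ) : ℝ) := by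
    simp [finrank_euclideanSpace]
  have h1 : Integrable (fun y : Ed d => (1 + ‖y‖) ^ (-((d+1 : ℕ):ℝ))) volume :=
    integrable_one_add_norm hfin
  refine h1.congr (Filter.Eventually.of_forall fun y => ?_)
  show (1 + ‖y‖) ^ (-((d+1 : ℕ):ℝ)) = ((1 + ‖y‖) ^ (d+1 : ℕ))⁻¹
  rw [Real.rpow_neg (by positivity), Real.rpow_natCast]

lemma integrable_of_le_prod {d : ℕ} {φ : Ed d × Ed d → ℂ}
    (hm : AEStronglyMeasurable φ (volume.prod volume)) {C : ℝ}
    (h : ∀ p : Ed d × Ed d, ‖φ p‖ ≤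
      (C * ((1 + ‖p.1‖) ^ (d+1 : ℕ))⁻¹) * ((1 + ‖p.2‖) ^ (d+1 : ℕ))⁻¹) :
    Integrable φ (volume.prod volume) := by
  have hbase := integrable_japanese d
  have hprod : Integrable
      (fun p : Ed d × Ed d => (C * ((1 + ‖p.1‖) ^ (d+1 : ℕ))⁻¹) *
        ((1 + ‖p.2‖) ^ (d+1 : ℕ))⁻¹) (volume.prod volume) :=
    (hbase.const_mul C).mul_prod hbase
  exact hprod.mono' hm (Filter.Eventually.of_forall h)

lemma conj_exp_neg (r : ℝ) :
    conj (Complex.exp (-(r:ℂ) * Complex.I)) = Complex.exp ((r:ℂ) * Complex.I) := by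
  rw [← Complex.exp_conj]
  simp

section Key

variable {d : ℕ} (f g : 𝓢(Ed d, ℂ)) (ξ : Ed d)

private def eF (ξ : Ed d) : Ed d → ℂ :=
  fun s => Complex.exp (-((inner ℝ s ξ : ℝ) : ℂ) * Complex.I)

lemma eF_norm (s : Ed d) : ‖eF ξ s‖ = 1 := norm_exp_neg_inner _

lemma PQ_combine (x z : Ed d) :
    (f (x + z) * eF ξ (x + z)) * conj (g (x - z) * eF ξ (x - z)) =
      f (x + z) * conj (g (x - z)) *
        Complex.exp (-((inner ℝ ((2:ℝ) • z) ξ : ℝ) : ℂ) * Complex.I) := by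
  rw [map_mul]
  rw [show conj (eF ξ (x - z)) = Complex.exp (((inner ℝ (x-z) ξ : ℝ) : ℂ) * Complex.I) from
    conj_exp_neg _]
  unfold eF
  rw [mul_mul_mul_comm, ← Complex.exp_add]
  congr 1
  congr 1
  have hr : (inner ℝ (x + z) ξ : ℝ) - (inner ℝ (x - z) ξ : ℝ) = (inner ℝ ((2:ℝ) • z) ξ : ℝ) := by
    rw [← inner_sub_left]
    congr 1
    module
  have := congrArg (fun r : ℝ => (r : ℂ)) hr
  push_cast at this ⊢
  linear_combination (-Complex.I) * this

lemma wig_integral_x :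
    ∫ x : Ed d, wig f g x ξ = (((2 * Real.pi) ^ (-(d : ℝ) / 2) : ℝ) : ℂ) *
      ((∫ s : Ed d, f s * eF ξ s) * conj (∫ t : Ed d, g t * eF ξ t)) := by
  classical
  set c : ℂ := (((2 * Real.pi) ^ (-(d : ℝ) / 2) : ℝ) : ℂ) with hc
  set P : Ed d → ℂ := fun s => f s * eF ξ s with hP
  set Q : Ed d → ℂ := fun t => g t * eF ξ t with hQ
  have h2d : ((2:ℝ) ^ d) ≠ 0 := by positivity
  -- step (ii)+(iii): scaling
  have hscale : ∀ x : Ed d,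
      (∫ y : Ed d, f (x + (2:ℝ)⁻¹ • y) * conj (g (x - (2:ℝ)⁻¹ • y)) * eF ξ y)
        = ((2:ℝ)^d) • ∫ z : Ed d, P (x + z) * conj (Q (x - z)) := by
    intro x
    have h2 := MeasureTheory.Measure.integral_comp_smul (volume : Measure (Ed d))
      (fun y : Ed d => f (x + (2:ℝ)⁻¹ • y) * conj (g (x - (2:ℝ)⁻¹ • y)) * eF ξ y) 2
    have hpt : ∀ z : Ed d,
        f (x + (2:ℝ)⁻¹ • ((2:ℝ) • z)) * conj (g (x - (2:ℝ)⁻¹ • ((2:ℝ) • z))) *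
          eF ξ ((2:ℝ) • z) = P (x + z) * conj (Q (x - z)) := by
      intro z
      have hz : (2:ℝ)⁻¹ • ((2:ℝ) • z) = z := by
        rw [smul_smul]; norm_num
      rw [hz, PQ_combine f g ξ x z]
      rfl
    rw [show (∫ z : Ed d, P (x + z) * conj (Q (x - z)))
        = ∫ z : Ed d, f (x + (2:ℝ)⁻¹ • ((2:ℝ) • z)) * conj (g (x - (2:ℝ)⁻¹ • ((2:ℝ) • z))) *
            eF ξ ((2:ℝ) • z) from integral_congr_ae (Filter.Eventually.of_forall
              fun z => (hpt z).symm)]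
    rw [h2, finrank_euclideanSpace, Fintype.card_fin, smul_smul]
    rw [abs_of_pos (by positivity : (0:ℝ) < ((2:ℝ)^d)⁻¹)]
    rw [mul_inv_cancel₀ h2d, one_smul]
  -- step (iv): translation
  have htrans : ∀ x : Ed d,
      (∫ z : Ed d, P (x + z) * conj (Q (x - z)))
        = ∫ z : Ed d, P z * conj (Q ((2:ℝ) • x - z)) := by
    intro x
    have h3 := integral_sub_right_eq_self (μ := (volume : Measure (Ed d)))
      (fun z : Ed d => P (x + z) * conj (Q (x - z))) x
    rw [← h3]
    refine integral_congr_ae (Filter.Eventually.of_forall fun z => ?_)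
    have e1 : x + (z - x) = z := by module
    have e2 : x - (z - x) = (2:ℝ) • x - z := by module
    simp only [e1, e2]
  -- step (vi): inner integral over x
  have hinner : ∀ z : Ed d,
      (∫ x : Ed d, conj (Q ((2:ℝ) • x - z)))
        = (((2:ℝ)^d)⁻¹ : ℝ) • conj (∫ t : Ed d, Q t) := by
    intro z
    have h4 := MeasureTheory.Measure.integral_comp_smul (volume : Measure (Ed d))
      (fun w : Ed d => conj (Q (w - z))) 2
    have h5 : (∫ x : Ed d, conj (Q ((2:ℝ) • x - z)))
        = ∫ x : Ed d, (fun w : Ed d => conj (Q (w - z))) ((2:ℝ) • x) := rfl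
    rw [h5, h4, finrank_euclideanSpace, Fintype.card_fin]
    rw [abs_of_pos (by positivity : (0:ℝ) < ((2:ℝ)^d)⁻¹)]
    congr 1
    rw [integral_sub_right_eq_self (fun w : Ed d => conj (Q w)) z]
    exact integral_conj
  -- integrability for Fubini
  have hInt : Integrable (Function.uncurry
      (fun x z : Ed d => P z * conj (Q ((2:ℝ) • x - z)))) (volume.prod volume) := by
    obtain ⟨B, hB0, hB⟩ := schwartz_pair_bound f g (2*(d+1))
    refine integrable_of_le_prod ?_ (C := B) ?_
    · refine Continuous.aestronglyMeasurable ?_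
      have hPc : Continuous P := by
        refine f.continuous.mul (Complex.continuous_exp.comp ?_)
        fun_prop
      have hQc : Continuous Q := by
        refine g.continuous.mul (Complex.continuous_exp.comp ?_)
        fun_prop
      refine Continuous.mul (hPc.comp continuous_snd) ?_
      refine Complex.continuous_conj.comp (hQc.comp ?_)
      fun_prop
    · rintro ⟨x, z⟩
      have hnP : ‖P z‖ = ‖f z‖ := by
        rw [hP]; simp only []
        rw [norm_mul, eF_norm, mul_one]
      have hnQ : ‖conj (Q ((2:ℝ) • x - z))‖ = ‖g ((2:ℝ) • x - z)‖ := by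
        rw [RCLike.norm_conj, hQ]; simp only []
        rw [norm_mul, eF_norm, mul_one]
      rw [Function.uncurry, norm_mul, hnP, hnQ]
      set t := (2:ℝ) • x - z with ht
      have hxt : ‖x‖ ≤ ‖z‖ + ‖t‖ := by
        have h2x : (2:ℝ) • x = z + t := by rw [ht]; module
        have : ‖(2:ℝ) • x‖ ≤ ‖z‖ + ‖t‖ := h2x ▸ norm_add_le z t
        rw [norm_smul] at this
        simp only [Real.norm_eq_abs, abs_two] at this
        nlinarith [norm_nonneg x]
      have hstep : ((1 + ‖x‖) * (1 + ‖z‖)) ≤ ((1 + ‖z‖) * (1 + ‖t‖))^2 := by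
        have e1 : 1 + ‖x‖ ≤ (1 + ‖z‖) * (1 + ‖t‖) :=
          one_add_prod_ge (norm_nonneg _) (norm_nonneg _) hxt
        have e2 : 1 + ‖z‖ ≤ (1 + ‖z‖) * (1 + ‖t‖) := by
          nlinarith [norm_nonneg z, norm_nonneg t]
        calc (1 + ‖x‖) * (1 + ‖z‖) ≤ ((1 + ‖z‖) * (1 + ‖t‖)) * ((1 + ‖z‖) * (1 + ‖t‖)) :=
              mul_le_mul e1 e2 (by positivity) (by positivity)
          _ = ((1 + ‖z‖) * (1 + ‖t‖))^2 := (sq _).symm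
      calc ‖f z‖ * ‖g t‖ ≤ B * (((1 + ‖z‖) * (1 + ‖t‖)) ^ (2*(d+1)))⁻¹ := hB z t
        _ ≤ B * (((1 + ‖x‖) * (1 + ‖z‖)) ^ (d+1))⁻¹ := by
            refine mul_le_mul_of_nonneg_left ?_ hB0
            have : ((1 + ‖z‖) * (1 + ‖t‖)) ^ (2*(d+1))
                = (((1 + ‖z‖) * (1 + ‖t‖))^2) ^ (d+1) := by
              rw [← pow_mul]
            rw [this]
            refine inv_pow_le_inv_pow (by positivity) hstep
        _ = (B * ((1 + ‖x‖) ^ (d+1 : ℕ))⁻¹) * ((1 + ‖z‖) ^ (d+1 : ℕ))⁻¹ := by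
            rw [mul_pow, mul_inv]
            ring
  -- main chain
  calc ∫ x : Ed d, wig f g x ξ
      = ∫ x : Ed d, c * (∫ y : Ed d,
          f (x + (2:ℝ)⁻¹ • y) * conj (g (x - (2:ℝ)⁻¹ • y)) * eF ξ y) := rfl
    _ = c * ∫ x : Ed d, (∫ y : Ed d,
          f (x + (2:ℝ)⁻¹ • y) * conj (g (x - (2:ℝ)⁻¹ • y)) * eF ξ y) :=
        integral_const_mul c _
    _ = c * ∫ x : Ed d, ((2:ℝ)^d) • ∫ z : Ed d, P z * conj (Q ((2:ℝ) • x - z)) := by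
        congr 1
        refine integral_congr_ae (Filter.Eventually.of_forall fun x => ?_)
        exact (hscale x).trans (congrArg (fun w => ((2:ℝ)^d) • w) (htrans x))
    _ = c * (((2:ℝ)^d) • ∫ x : Ed d, ∫ z : Ed d, P z * conj (Q ((2:ℝ) • x - z))) := by
        rw [integral_smul]
    _ = c * (((2:ℝ)^d) • ∫ z : Ed d, ∫ x : Ed d, P z * conj (Q ((2:ℝ) • x - z))) := by
        rw [integral_integral_swap hInt]
    _ = c * (((2:ℝ)^d) • ∫ z : Ed d, P z * ((((2:ℝ)^d)⁻¹ : ℝ) • conj (∫ t : Ed d, Q t))) := by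
        congr 2
        refine integral_congr_ae (Filter.Eventually.of_forall fun z => ?_)
        exact (integral_const_mul (P z) _).trans (congrArg (fun w => P z * w) (hinner z))
    _ = c * (((2:ℝ)^d) • ((((2:ℝ)^d)⁻¹ : ℝ) • ((∫ s : Ed d, P s) * conj (∫ t : Ed d, Q t)))) := by
        congr 2
        rw [show (fun z => P z * ((((2:ℝ)^d)⁻¹ : ℝ) • conj (∫ t : Ed d, Q t)))
            = fun z => (((2:ℝ)^d)⁻¹ : ℝ) • (P z * conj (∫ t : Ed d, Q t)) from
          funext fun z => mul_smul_comm _ _ _]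
        rw [integral_smul, integral_mul_const]
    _ = c * ((∫ s : Ed d, P s) * conj (∫ t : Ed d, Q t)) := by
        rw [smul_smul, mul_inv_cancel₀ h2d, one_smul]

end Key


end Helpers


theorem stmt8 {Ω : Type} [MeasurableSpace Ω] (P : Measure Ω) [IsProbabilityMeasure P]
    {d : ℕ} (u : SchwartzMap (Ed d) ℂ →L⋆[ℂ] Lp ℂ 2 P)
    (μ : Ed d → ℝ) (hμ0 : ∀ ξ, 0 ≤ μ ξ) (hμc : Continuous μ)
    (hμb : ∃ C > 0, ∃ N : ℕ, ∀ ξ : Ed d, |μ ξ| ≤ C * (1 + ‖ξ‖) ^ N)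
    -- `u` is stationary with spectral density `μ`
    (hstat : ∀ φ ψ : SchwartzMap (Ed d) ℂ,
      ∫ ω, u φ ω * conj (u ψ ω) ∂P =
        ∫ ξ : Ed d, ftInt ψ ξ * conj (ftInt φ ξ) * (μ ξ : ℂ)) :
    -- the Wigner spectrum of `u` equals `(2π)^{-d/2} (1 ⊗ μ)`
    ∀ f g : SchwartzMap (Ed d) ℂ,
      ∫ ω, u f ω * conj (u g ω) ∂P =
        (((2 * Real.pi) ^ (-(d : ℝ) / 2) : ℝ) : ℂ) *
          ∫ x : Ed d, ∫ ξ : Ed d, (μ ξ : ℂ) * conj (wig f g x ξ) := by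
  intro f g
  rw [hstat f g]
  obtain ⟨Cμ, hCμ0, N, hμN⟩ := hμb
  set c : ℂ := (((2 * Real.pi) ^ (-(d : ℝ) / 2) : ℝ) : ℂ) with hcdef
  -- joint integrability of the Wigner-spectrum integrand
  obtain ⟨Cw, hCw0, hCw⟩ := wig_bound f g (d+1) (N + (d+1))
  have hΨmeas : AEStronglyMeasurable
      (Function.uncurry fun x ξ : Ed d => (μ ξ : ℂ) * conj (wig f g x ξ))
      (volume.prod volume) := by
    refine Continuous.aestronglyMeasurable ?_
    refine Continuous.mul ?_ ?_
    · exact Complex.continuous_ofReal.comp (hμc.comp continuous_snd)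
    · exact Complex.continuous_conj.comp (wig_continuous f g)
  have hΨint : Integrable
      (Function.uncurry fun x ξ : Ed d => (μ ξ : ℂ) * conj (wig f g x ξ))
      (volume.prod volume) := by
    refine integrable_of_le_prod hΨmeas (C := Cμ * Cw) ?_
    rintro ⟨x, ξ⟩
    have hA : (0:ℝ) < (1 + ‖x‖) ^ (d+1 : ℕ) := by positivity
    have hB : (0:ℝ) < (1 + ‖ξ‖) ^ (d+1 : ℕ) := by positivity
    have hnorm : ‖Function.uncurry (fun x ξ : Ed d => (μ ξ : ℂ) * conj (wig f g x ξ)) (x, ξ)‖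
        = |μ ξ| * ‖wig f g x ξ‖ := by
      rw [Function.uncurry, norm_mul, RCLike.norm_conj]
      congr 1
      exact (Complex.norm_real _).trans (Real.norm_eq_abs _)
    rw [hnorm]
    have hkey : |μ ξ| * ‖wig f g x ξ‖ * ((1 + ‖x‖) ^ (d+1 : ℕ) * (1 + ‖ξ‖) ^ (d+1 : ℕ))
        ≤ Cμ * Cw := by
      have h1 : |μ ξ| ≤ Cμ * (1 + ‖ξ‖) ^ N := hμN ξ
      have h2 : (1 + ‖x‖) ^ (d+1 : ℕ) * (1 + ‖ξ‖) ^ (N + (d+1)) * ‖wig f g x ξ‖ ≤ Cw :=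
        hCw x ξ
      calc |μ ξ| * ‖wig f g x ξ‖ * ((1 + ‖x‖) ^ (d+1 : ℕ) * (1 + ‖ξ‖) ^ (d+1 : ℕ))
          ≤ (Cμ * (1 + ‖ξ‖) ^ N) * ‖wig f g x ξ‖ *
              ((1 + ‖x‖) ^ (d+1 : ℕ) * (1 + ‖ξ‖) ^ (d+1 : ℕ)) := by
            refine mul_le_mul_of_nonneg_right
              (mul_le_mul_of_nonneg_right h1 (norm_nonneg _)) (by positivity)
        _ = Cμ * ((1 + ‖x‖) ^ (d+1 : ℕ) * (1 + ‖ξ‖) ^ (N + (d+1)) * ‖wig f g x ξ‖) := by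
            rw [pow_add]
            ring
        _ ≤ Cμ * Cw := mul_le_mul_of_nonneg_left h2 (le_of_lt hCμ0)
    have hAB : (0:ℝ) < (1 + ‖x‖) ^ (d+1 : ℕ) * (1 + ‖ξ‖) ^ (d+1 : ℕ) := mul_pos hA hB
    have := (le_div_iff₀ hAB).mpr hkey
    calc |μ ξ| * ‖wig f g x ξ‖
        ≤ Cμ * Cw / ((1 + ‖x‖) ^ (d+1 : ℕ) * (1 + ‖ξ‖) ^ (d+1 : ℕ)) := this
      _ = (Cμ * Cw * ((1 + ‖x‖) ^ (d+1 : ℕ))⁻¹) * ((1 + ‖ξ‖) ^ (d+1 : ℕ))⁻¹ := by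
          rw [div_eq_mul_inv, mul_inv]
          ring
  -- the key computation
  have hft : ∀ (h : SchwartzMap (Ed d) ℂ) (ξ : Ed d),
      ftInt h ξ = c * ∫ s : Ed d, h s * eF ξ s := fun h ξ => rfl
  have hR : c * (∫ x : Ed d, ∫ ξ : Ed d, (μ ξ : ℂ) * conj (wig f g x ξ))
      = ∫ ξ : Ed d, ftInt g ξ * conj (ftInt f ξ) * (μ ξ : ℂ) := by
    calc c * (∫ x : Ed d, ∫ ξ : Ed d, (μ ξ : ℂ) * conj (wig f g x ξ))
        = c * (∫ ξ : Ed d, ∫ x : Ed d, (μ ξ : ℂ) * conj (wig f g x ξ)) := by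
          rw [integral_integral_swap hΨint]
      _ = c * (∫ ξ : Ed d, (μ ξ : ℂ) * conj (∫ x : Ed d, wig f g x ξ)) := by
          congr 1
          refine integral_congr_ae (Filter.Eventually.of_forall fun ξ => ?_)
          exact (integral_const_mul _ _).trans
            (congrArg (fun w => (μ ξ : ℂ) * w) integral_conj)
      _ = ∫ ξ : Ed d, c * ((μ ξ : ℂ) * conj (∫ x : Ed d, wig f g x ξ)) := by
          rw [integral_const_mul]
      _ = ∫ ξ : Ed d, ftInt g ξ * conj (ftInt f ξ) * (μ ξ : ℂ) := by
          refine integral_congr_ae (Filter.Eventually.of_forall fun ξ => ?_)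
          show c * ((μ ξ : ℂ) * conj (∫ x : Ed d, wig f g x ξ))
              = ftInt g ξ * conj (ftInt f ξ) * (μ ξ : ℂ)
          rw [wig_integral_x f g ξ, hft f ξ, hft g ξ]
          rw [← hcdef]
          simp only [map_mul, Complex.conj_conj, hcdef, Complex.conj_ofReal]
          ring
  exact hR.symm

end
end

section
/- Let x₁, x₂, ξ₁, ξ₂ ∈ ℝ satisfy 2x₁ > |ξ₂|, x₂ + ξ₁/2 ≠ 0 and x₂ − ξ₁/2 ≠ 0. Set a = (x₁ − ξ₂/2)·(x₂ + ξ₁/2) and b = (x₁ + ξ₂/2)·(x₂ − ξ₁/2). Then 4·(x₁² − ξ₂²/4)²·( sin(a)/a )²·( sin(b)/b )² = ( ( cos(x₁ξ₁ − x₂ξ₂) − cos(2x₁x₂ − ξ₁ξ₂/2) ) / ( x₂² − ξ₁²/4 ) )². (This identity expresses the Weyl symbol of the covariance operator of the zero-mean Wigner distribution of Brownian motion, σ_W(x₁,x₂,ξ₁,ξ₂) = σ_b(x₁−ξ₂/2, x₂+ξ₁/2)·σ_b(x₁+ξ₂/2, x₂−ξ₁/2) with σ_b(x,ξ) = 2x²(sin(xξ)/(xξ))²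 for x > 0, in closed form.) -/
/-- Closed form for the Weyl symbol of the covariance operator of the zero-mean Wigner
distribution of Brownian motion:
`σ_W(x₁,x₂,ξ₁,ξ₂) = σ_b(x₁−ξ₂/2, x₂+ξ₁/2)·σ_b(x₁+ξ₂/2, x₂−ξ₁/2)` where
`σ_b(x,ξ) = 2x²(sin(xξ)/(xξ))²`. -/
theorem stmt15 (x₁ x₂ ξ₁ ξ₂ : ℝ) (h1 : 2 * x₁ > |ξ₂|)
    (h2 : x₂ + ξ₁ / 2 ≠ 0) (h3 : x₂ - ξ₁ / 2 ≠ 0) :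
    4 * (x₁ ^ 2 - ξ₂ ^ 2 / 4) ^ 2 *
        (Real.sin ((x₁ - ξ₂ / 2) * (x₂ + ξ₁ / 2)) / ((x₁ - ξ₂ / 2) * (x₂ + ξ₁ / 2))) ^ 2 *
        (Real.sin ((x₁ + ξ₂ / 2) * (x₂ - ξ₁ / 2)) / ((x₁ + ξ₂ / 2) * (x₂ - ξ₁ / 2))) ^ 2 =
      ((Real.cos (x₁ * ξ₁ - x₂ * ξ₂) - Real.cos (2 * x₁ * x₂ - ξ₁ * ξ₂ / 2)) /
          (x₂ ^ 2 - ξ₁ ^ 2 / 4)) ^ 2 := by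
  obtain ⟨ha', hb'⟩ := abs_lt.mp h1
  have hp : x₁ - ξ₂ / 2 ≠ 0 := by nlinarith [abs_nonneg ξ₂]
  have hq : x₁ + ξ₂ / 2 ≠ 0 := by nlinarith [abs_nonneg ξ₂]
  set a := (x₁ - ξ₂ / 2) * (x₂ + ξ₁ / 2) with ha
  set b := (x₁ + ξ₂ / 2) * (x₂ - ξ₁ / 2) with hb
  have h4 : x₁ * ξ₁ - x₂ * ξ₂ = a - b := by rw [ha, hb]; ring
  have h5 : 2 * x₁ * x₂ - ξ₁ * ξ₂ / 2 = a + b := by rw [ha, hb]; ring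
  have hcos : Real.cos (a - b) - Real.cos (a + b) = 2 * Real.sin a * Real.sin b := by
    rw [Real.cos_sub_cos]
    have e1 : (a - b + (a + b)) / 2 = a := by ring
    have e2 : (a - b - (a + b)) / 2 = -b := by ring
    rw [e1, e2, Real.sin_neg]; ring
  rw [h4, h5, hcos]
  have hane : a ≠ 0 := mul_ne_zero hp h2
  have hbne : b ≠ 0 := mul_ne_zero hq h3
  have hd : x₂ ^ 2 - ξ₁ ^ 2 / 4 ≠ 0 := by
    have e : x₂ ^ 2 - ξ₁ ^ 2 / 4 = (x₂ + ξ₁ / 2) * (x₂ - ξ₁ / 2) := by ring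
    rw [e]; exact mul_ne_zero h2 h3
  have hab : a * b = (x₁ ^ 2 - ξ₂ ^ 2 / 4) * (x₂ ^ 2 - ξ₁ ^ 2 / 4) := by rw [ha, hb]; ring
  clear_value a b
  have hd' : 4 * x₂ ^ 2 - ξ₁ ^ 2 ≠ 0 := by
    intro h; apply hd; linarith
  rw [div_pow, div_pow, div_pow, eq_div_iff (pow_ne_zero 2 hd)]
  field_simp
  linear_combination (-256 * Real.sin a ^ 2 * Real.sin b ^ 2 *
    (a * b + (x₁ ^ 2 - ξ₂ ^ 2 / 4) * (x₂ ^ 2 - ξ₁ ^ 2 / 4))) * hab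
end
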